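/- Let R be a strongly J-*-clean ring. Then for every a ∈ R, the projection e with a - e ∈ J(R) and ae = ea is unique; that is, if e, f are projections with a - e ∈ J(R), a - f ∈ J(R), ae = ea, af = fa, then e = f. -/
import Mathlib

section aux
variable {R : Type*} [Ring R]

lemma junit {x : R} (hx : x ∈ Ideal.jacobson (⊥ : Ideal R)) : IsUnit (1 + x) := by
  obtain ⟨z, hz⟩ := Ideal.mem_jacobson_iff.1 hx 1
  rw [Ideal.mem_bot] at hz
  have h' : z * 1 * x + z = 1 := by rwa [sub_eq_zero] at hz
  have hz1 : z * (1 + x) = 1 := by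
    calc z * (1 + x) = z * 1 * x + z := by noncomm_ring
    _ = 1 := h'
  have hzd : z = 1 - z * x := by
    rw [eq_sub_iff_add_eq]
    calc z + z * x = z * 1 * x + z := by noncomm_ring
    _ = 1 := h'
  have hzx : -(z * x) ∈ Ideal.jacobson (⊥ : Ideal R) :=
    neg_mem (Ideal.mul_mem_left _ z hx)
  obtain ⟨w, hw⟩ := Ideal.mem_jacobson_iff.1 hzx 1
  rw [Ideal.mem_bot] at hw
  have h2 : w * 1 * -(z * x) + w = 1 := by rwa [sub_eq_zero] at hw
  have hw1 : w * z = 1 := by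
    rw [hzd]
    calc w * (1 - z * x) = w * 1 * -(z * x) + w := by noncomm_ring
    _ = 1 := h2
  have hw2 : w = 1 + x := by
    calc w = w * (z * (1 + x)) := by rw [hz1, mul_one]
    _ = (w * z) * (1 + x) := by rw [mul_assoc]
    _ = 1 + x := by rw [hw1, one_mul]
  exact isUnit_iff_exists.2 ⟨z, by rw [← hw2, hw1], hz1⟩

end aux

/-- A *-ring `R` is strongly J-*-clean if every element is the sum of a projection
and an element of the Jacobson radical that commute. -/
def StronglyJStarClean (R : Type*) [Ring R] [StarRing R] : Prop :=
  ∀ a : R, ∃ e u : R, e * e = e ∧ star e = e ∧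
    u ∈ Ideal.jacobson (⊥ : Ideal R) ∧ a = e + u ∧ a * e = e * a

section aux2
variable {R : Type*} [Ring R] [StarRing R] (h : StronglyJStarClean R)

include h in
/-- every idempotent is a projection -/
lemma idem_proj (a : R) (ha : a * a = a) : star a = a := by
  obtain ⟨g, u, hg2, hgs, huJ, hagu, hcomm⟩ := h a
  have hug : u * g = g * u := by
    have : (g + u) * g = g * (g + u) := by rw [← hagu]; exact hcomm
    have h2 : g * g + u * g = g * g + g * u := by
      calc g * g + u * g = (g + u) * g := by noncomm_ring
      _ = g * (g + u) := this
      _ = g * g + g * u := by noncomm_ring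
    exact add_left_cancel h2
  -- u * (2g - 1 + u) = 0
  have key : u * (2 * g - 1 + u) = 0 := by
    have h2 : (g + u) * (g + u) = g + u := by rw [← hagu]; exact ha
    have : g * g + g * u + u * g + u * u = g + u := by
      calc g * g + g * u + u * g + u * u = (g + u) * (g + u) := by noncomm_ring
      _ = g + u := h2
    rw [hg2, hug] at this
    have h3 : g * u + g * u + u * u = u := by
      have := this
      have h4 : g + (g * u + g * u + u * u) = g + u := by
        calc g + (g * u + g * u + u * u) = g + g * u + g * u + u * u := by abel
        _ = g + u := this
      exact add_left_cancel h4
    have e1 : u * (2 * g - 1 + u) = g * u + g * u + u * u - u := by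
      rw [← hug]; noncomm_ring
    rw [e1, h3, sub_self]
  have hunit : IsUnit (2 * g - 1 + u) := by
    have hinv : (2 * g - 1) * (2 * g - 1) = 1 := by
      have : (2 : R) * g - 1 = 2 * g - 1 := rfl
      calc (2 * g - 1) * (2 * g - 1) = 4 * (g * g) - 4 * g + 1 := by noncomm_ring
      _ = 1 := by rw [hg2]; noncomm_ring
    have hu1 : IsUnit (2 * g - 1) := isUnit_iff_exists.2 ⟨2 * g - 1, hinv, hinv⟩
    have hmem : (2 * g - 1) * u ∈ Ideal.jacobson (⊥ : Ideal R) :=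
      Ideal.mul_mem_left _ _ huJ
    have := junit hmem
    have heq : (2 * g - 1) * (1 + (2 * g - 1) * u) = 2 * g - 1 + u := by
      calc (2 * g - 1) * (1 + (2 * g - 1) * u)
          = (2 * g - 1) + ((2 * g - 1) * (2 * g - 1)) * u := by noncomm_ring
      _ = 2 * g - 1 + u := by rw [hinv, one_mul]
    rw [← heq]
    exact hu1.mul this
  have hu0 : u = 0 := by
    refine hunit.mul_right_cancel ?_
    rw [key, zero_mul]
  rw [hagu, hu0, add_zero, hgs]



include h in
lemma idem_central (e x : R) (he : e * e = e) : e * x = x * e := by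
  have he' : ∀ y : R, e * (e * y) = e * y := fun y => by rw [← mul_assoc, he]
  -- Step 1: e * x = e * x * e
  have step1 : e * x = e * (x * e) := by
    set b := e * x - e * (x * e) with hbdef
    have heb : e * b = b := by rw [hbdef, mul_sub, he', he']
    have hbe : b * e = 0 := by
      rw [hbdef, sub_mul, mul_assoc, mul_assoc, mul_assoc, he, sub_self]
    have hbb : b * b = 0 := by
      calc b * b = b * (e * b) := by rw [heb]
      _ = (b * e) * b := by rw [mul_assoc]
      _ = 0 := by rw [hbe, zero_mul]
    have hidem : (e + b) * (e + b) = e + b := by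
      calc (e + b) * (e + b) = e * e + e * b + b * e + b * b := by noncomm_ring
      _ = e + b := by rw [he, heb, hbe, hbb, add_zero, add_zero]
    have hse : star e = e := idem_proj h e he
    have hstar : star b = b := by
      have := idem_proj h (e + b) hidem
      rw [star_add, hse] at this
      exact add_left_cancel this
    have hsb : star b = star x * e - e * (star x * e) := by
      rw [hbdef, star_sub, star_mul, star_mul, star_mul, hse, mul_assoc]
    have hb0 : b = 0 := by
      have h1 : b = e * star b := by rw [hstar, heb]
      rw [hsb, mul_sub, he'] at h1
      rw [h1, sub_self]
    rw [← sub_eq_zero, ← hbdef]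
    exact hb0
  -- Step 2: x * e = e * (x * e)
  have step2 : x * e = e * (x * e) := by
    set c := x * e - e * (x * e) with hcdef
    have hce : c * e = c := by
      rw [hcdef, sub_mul, mul_assoc e (x * e) e, mul_assoc x e e, he]
    have hec : e * c = 0 := by
      rw [hcdef, mul_sub, he', ← mul_assoc]
      exact sub_self _
    have hcc : c * c = 0 := by
      calc c * c = (c * e) * c := by rw [hce]
      _ = c * (e * c) := by rw [mul_assoc]
      _ = 0 := by rw [hec, mul_zero]
    have hidem : (e + c) * (e + c) = e + c := by
      calc (e + c) * (e + c) = e * e + e * c + c * e + c * c := by noncomm_ring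
      _ = e + c := by rw [he, hec, hce, hcc]; abel
    have hse : star e = e := idem_proj h e he
    have hstar : star c = c := by
      have := idem_proj h (e + c) hidem
      rw [star_add, hse] at this
      exact add_left_cancel this
    have hsc : star c = e * star x - e * (star x * e) := by
      rw [hcdef, star_sub, star_mul, star_mul, star_mul, hse, mul_assoc]
    have hc0 : c = 0 := by
      have h1 : c = star c * e := by rw [hstar, hce]
      rw [hsc, sub_mul, mul_assoc, mul_assoc, mul_assoc, he] at h1
      rw [h1, sub_self]
    rw [← sub_eq_zero, ← hcdef]
    exact hc0
  rw [step1, step2]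
  exact he' (x * e)

end aux2

theorem stmt_11 (R : Type*) [Ring R] [StarRing R] (h : StronglyJStarClean R) :
    ∀ a e f : R, e * e = e → star e = e → f * f = f → star f = f →
      a - e ∈ Ideal.jacobson (⊥ : Ideal R) → a - f ∈ Ideal.jacobson (⊥ : Ideal R) →
      a * e = e * a → a * f = f * a → e = f := by
  intro a e f he hse hf hsf heJ hfJ hae haf
  have hef : e * f = f * e := idem_central h e f he
  have hw : e - f ∈ Ideal.jacobson (⊥ : Ideal R) := by
    have hsub := sub_mem hfJ heJ
    have : (a - f) - (a - e) = e - f := by abel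
    rwa [this] at hsub
  set w := e - f with hwdef
  have h1 : w * w = e - f * e - f * e + f := by
    have : w * w = e * e - e * f - f * e + f * f := by rw [hwdef]; noncomm_ring
    rw [he, hf, hef] at this
    rw [this]
  have hefe : e * (f * e) = f * e := by rw [← mul_assoc, hef, mul_assoc, he]
  have hffe : f * (f * e) = f * e := by rw [← mul_assoc, hf]
  have h3 : w * (w * w) = w := by
    rw [h1, hwdef]
    calc (e - f) * (e - f * e - f * e + f)
        = e * e - e * (f * e) - e * (f * e) + e * f
          - (f * e - f * (f * e) - f * (f * e) + f * f) := by noncomm_ring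
    _ = e - f := by rw [he, hf, hef, hefe, hffe]; abel
  have hwwJ : -(w * w) ∈ Ideal.jacobson (⊥ : Ideal R) :=
    neg_mem (Ideal.mul_mem_left _ w hw)
  have hunit : IsUnit (1 + -(w * w)) := junit hwwJ
  have hzero : w * (1 + -(w * w)) = 0 * (1 + -(w * w)) := by
    rw [mul_add, mul_one, mul_neg, h3, add_neg_cancel, zero_mul]
  have hw0 : w = 0 := hunit.mul_right_cancel hzero
  rw [hwdef] at hw0
  exact sub_eq_zero.mp hw0
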